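/- For every finite connected weighted vertex-transitive graph G with common degree w and edge weights ≥ 1, the second smallest eigenvalue of the normalized Laplacian satisfies λ₂ ≥ 1/(2·w·diam²), where diam is the graph diameter. -/

import Mathlib

/-- The normalized Laplacian `I - A/w` of a weighted graph with common degree `wd`. -/
noncomputable def normLapT {n : ℕ} (W : Matrix (Fin n) (Fin n) ℝ) (wd : ℝ) :
    Matrix (Fin n) (Fin n) ℝ :=
  Matrix.of fun x y => (if x = y then (1 : ℝ) else 0) - W x y / wd


open Finset Matrix

variable {n : ℕ}

/-- 0/1 adjacency matrix of the support graph. -/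
noncomputable def Bmat (W : Matrix (Fin n) (Fin n) ℝ) : Matrix (Fin n) (Fin n) ℝ :=
  Matrix.of fun a b => if a ≠ b ∧ W a b ≠ 0 then (1:ℝ) else 0

lemma Bmat_nonneg (W : Matrix (Fin n) (Fin n) ℝ) (a b : Fin n) : 0 ≤ Bmat W a b := by
  unfold Bmat; dsimp; split <;> norm_num

lemma Bpow_nonneg (W : Matrix (Fin n) (Fin n) ℝ) (k : ℕ) (x y : Fin n) :
    0 ≤ (Bmat W ^ k) x y := by
  induction k generalizing x y with
  | zero => simp [Matrix.one_apply]; split <;> norm_num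
  | succ k ih =>
      rw [pow_succ', Matrix.mul_apply]
      exact Finset.sum_nonneg fun a _ => mul_nonneg (Bmat_nonneg W x a) (ih a y)

lemma Bmat_adj (W : Matrix (Fin n) (Fin n) ℝ) (hsym : ∀ x y, W x y = W y x) (a b : Fin n)
    (h : (SimpleGraph.fromRel fun x y => W x y ≠ 0).Adj a b) : Bmat W a b = 1 := by
  rw [SimpleGraph.fromRel_adj] at h
  obtain ⟨hne, h | h⟩ := h
  · simp [Bmat, hne, h]
  · rw [hsym] at h; simp [Bmat, hne, h]

lemma Bpow_equivariant (W : Matrix (Fin n) (Fin n) ℝ) (e : Equiv.Perm (Fin n))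
    (hWe : ∀ a b, W (e a) (e b) = W a b) (k : ℕ) (x y : Fin n) :
    (Bmat W ^ k) (e x) (e y) = (Bmat W ^ k) x y := by
  have hB : ∀ a b, Bmat W (e a) (e b) = Bmat W a b := by
    intro a b
    simp only [Bmat, Matrix.of_apply, hWe]
    congr 1
    simp [e.injective.ne_iff]
  induction k generalizing x y with
  | zero => simp [Matrix.one_apply, e.injective.eq_iff]
  | succ k ih =>
      rw [pow_succ']
      simp only [Matrix.mul_apply]
      rw [← Equiv.sum_comp e (fun a => Bmat W (e x) a * (Bmat W ^ k) a (e y))]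
      exact Finset.sum_congr rfl fun a _ => by rw [hB, ih]

lemma one_le_Bpow_walk (W : Matrix (Fin n) (Fin n) ℝ) (hsym : ∀ x y, W x y = W y x)
    {x y : Fin n} (p : (SimpleGraph.fromRel fun x y => W x y ≠ 0).Walk x y) :
    1 ≤ (Bmat W ^ p.length) x y := by
  induction p with
  | nil => simp [Matrix.one_apply]
  | @cons u v w h p ih =>
      rw [SimpleGraph.Walk.length_cons, pow_succ', Matrix.mul_apply]
      calc (1:ℝ) ≤ Bmat W u v * (Bmat W ^ p.length) v w := by
            rw [Bmat_adj W hsym u v h]; linarith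
        _ ≤ _ := Finset.single_le_sum (f := fun a => Bmat W u a * (Bmat W ^ p.length) a w)
            (fun a _ => mul_nonneg (Bmat_nonneg W u a) (Bpow_nonneg W _ a w)) (mem_univ v)

/-- Sum over length-`k` walks from `x` to `y` of the sum of squared increments of `f`. -/
noncomputable def Qsum (W : Matrix (Fin n) (Fin n) ℝ) (f : Fin n → ℝ) (k : ℕ) (x y : Fin n) : ℝ :=
  ∑ i ∈ range k, ∑ a, ∑ b,
    (Bmat W ^ i) x a * Bmat W a b * (Bmat W ^ (k - 1 - i)) b y * (f a - f b) ^ 2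

lemma Qsum_nonneg (W : Matrix (Fin n) (Fin n) ℝ) (f : Fin n → ℝ) (k : ℕ) (x y : Fin n) :
    0 ≤ Qsum W f k x y := by
  refine Finset.sum_nonneg fun i _ => Finset.sum_nonneg fun a _ => Finset.sum_nonneg fun b _ => ?_
  have := Bpow_nonneg W i x a
  have := Bmat_nonneg W a b
  have := Bpow_nonneg W (k - 1 - i) b y
  positivity

lemma Qsum_succ (W : Matrix (Fin n) (Fin n) ℝ) (f : Fin n → ℝ) (k : ℕ) (x y : Fin n) :
    Qsum W f (k + 1) x y =
      (∑ b, Bmat W x b * (Bmat W ^ k) b y * (f x - f b) ^ 2)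
        + ∑ c, Bmat W x c * Qsum W f k c y := by
  unfold Qsum
  rw [Finset.sum_range_succ']
  have eq1 : (∑ i ∈ range k, ∑ a, ∑ b,
      (Bmat W ^ (i+1)) x a * Bmat W a b * (Bmat W ^ (k + 1 - 1 - (i+1))) b y * (f a - f b) ^ 2)
      = ∑ c, Bmat W x c * ∑ i ∈ range k, ∑ a, ∑ b,
          (Bmat W ^ i) c a * Bmat W a b * (Bmat W ^ (k - 1 - i)) b y * (f a - f b) ^ 2 := by
    have step1 : (∑ i ∈ range k, ∑ a, ∑ b,
        (Bmat W ^ (i+1)) x a * Bmat W a b * (Bmat W ^ (k + 1 - 1 - (i+1))) b y * (f a - f b) ^ 2)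
        = ∑ i ∈ range k, ∑ a, ∑ b, ∑ c,
            Bmat W x c * ((Bmat W ^ i) c a * Bmat W a b * (Bmat W ^ (k - 1 - i)) b y
              * (f a - f b) ^ 2) := by
      refine Finset.sum_congr rfl fun i _ => Finset.sum_congr rfl fun a _ =>
        Finset.sum_congr rfl fun b _ => ?_
      have hk : k + 1 - 1 - (i+1) = k - 1 - i := by omega
      rw [hk, pow_succ', Matrix.mul_apply, Finset.sum_mul, Finset.sum_mul, Finset.sum_mul]
      exact Finset.sum_congr rfl fun c _ => by ring
    rw [step1]
    have step2 : ∀ i ∈ range k, (∑ a : Fin n, ∑ b : Fin n, ∑ c : Fin n,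
        Bmat W x c * ((Bmat W ^ i) c a * Bmat W a b * (Bmat W ^ (k - 1 - i)) b y
          * (f a - f b) ^ 2))
        = ∑ c : Fin n, ∑ a : Fin n, ∑ b : Fin n,
            Bmat W x c * ((Bmat W ^ i) c a * Bmat W a b * (Bmat W ^ (k - 1 - i)) b y
              * (f a - f b) ^ 2) := by
      intro i _
      trans ∑ a : Fin n, ∑ c : Fin n, ∑ b : Fin n,
        Bmat W x c * ((Bmat W ^ i) c a * Bmat W a b * (Bmat W ^ (k - 1 - i)) b y
          * (f a - f b) ^ 2)
      · exact Finset.sum_congr rfl fun a _ => Finset.sum_comm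
      · exact Finset.sum_comm
    rw [Finset.sum_congr rfl step2, Finset.sum_comm]
    refine Finset.sum_congr rfl fun c _ => ?_
    rw [Finset.mul_sum]
    refine Finset.sum_congr rfl fun i _ => ?_
    rw [Finset.mul_sum]
    refine Finset.sum_congr rfl fun a _ => ?_
    rw [Finset.mul_sum]
  have eq2 : (∑ a, ∑ b,
      (Bmat W ^ 0) x a * Bmat W a b * (Bmat W ^ (k + 1 - 1 - 0)) b y * (f a - f b) ^ 2)
      = ∑ b, Bmat W x b * (Bmat W ^ k) b y * (f x - f b) ^ 2 := by
    simp only [pow_zero, Matrix.one_apply, Nat.add_sub_cancel, Nat.sub_zero]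
    rw [Finset.sum_comm]
    refine Finset.sum_congr rfl fun b _ => ?_
    rw [Finset.sum_eq_single x]
    · simp
    · intro a _ ha
      simp [Ne.symm ha]
    · simp
  rw [eq1, eq2, add_comm]

lemma sum_Bpow_mid (W : Matrix (Fin n) (Fin n) ℝ) {i k : ℕ} (hik : i < k) (x y : Fin n) :
    (∑ a, ∑ b, (Bmat W ^ i) x a * Bmat W a b * (Bmat W ^ (k - 1 - i)) b y)
      = (Bmat W ^ k) x y := by
  have h : Bmat W ^ k = Bmat W ^ i * (Bmat W * Bmat W ^ (k - 1 - i)) := by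
    rw [← pow_succ', ← pow_add]
    congr 1
    omega
  rw [h, Matrix.mul_apply]
  refine Finset.sum_congr rfl fun a _ => ?_
  rw [Matrix.mul_apply, Finset.mul_sum]
  refine Finset.sum_congr rfl fun b _ => ?_
  ring

lemma Qsum_zero (W : Matrix (Fin n) (Fin n) ℝ) (f : Fin n → ℝ) (x y : Fin n) :
    Qsum W f 0 x y = 0 := by
  unfold Qsum; simp

lemma step_ineq {c u v : ℝ} (hc : 1 ≤ c) : (u + v)^2 ≤ (c+1)*u^2 + ((c+1)/c)*v^2 := by
  have hc0 : 0 < c := lt_of_lt_of_le one_pos hc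
  have h : c * ((u+v)^2) ≤ c * ((c+1)*u^2) + (c+1)*v^2 := by nlinarith [sq_nonneg (v - c*u)]
  have h2 : (u+v)^2 ≤ (c * ((c+1)*u^2) + (c+1)*v^2)/c := by
    rw [le_div_iff₀ hc0]; linarith
  calc (u+v)^2 ≤ (c * ((c+1)*u^2) + (c+1)*v^2)/c := h2
    _ = (c+1)*u^2 + ((c+1)/c)*v^2 := by field_simp

lemma key_CS (W : Matrix (Fin n) (Fin n) ℝ) (f : Fin n → ℝ) :
    ∀ (k : ℕ) (x y : Fin n),
      (Bmat W ^ k) x y * (f x - f y) ^ 2 ≤ (k : ℝ) * Qsum W f k x y := by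
  intro k
  induction k with
  | zero =>
      intro x y
      rcases eq_or_ne x y with h | h
      · subst h; simp
      · simp [Matrix.one_apply, h]
  | succ k ih =>
      intro x y
      rcases Nat.eq_zero_or_pos k with hk | hk
      · subst hk
        rw [pow_one, Qsum_succ]
        simp only [Qsum_zero, mul_zero, Finset.sum_const_zero, add_zero, pow_zero,
          Matrix.one_apply, Nat.cast_one, one_mul, Nat.cast_ofNat, Nat.zero_add]
        rw [Finset.sum_eq_single y]
        · simp
        · intro b _ hb; simp [hb]
        · simp
      · have hc : (1:ℝ) ≤ (k:ℝ) := by exact_mod_cast hk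
        have hc0 : (0:ℝ) < k := by linarith
        rw [pow_succ', Matrix.mul_apply, Finset.sum_mul, Qsum_succ]
        push_cast
        have point : ∀ a : Fin n, Bmat W x a * (Bmat W ^ k) a y * (f x - f y) ^ 2
            ≤ ((k:ℝ)+1) * (Bmat W x a * (Bmat W ^ k) a y * (f x - f a) ^ 2)
              + ((k:ℝ)+1) * (Bmat W x a * Qsum W f k a y) := by
          intro a
          have h1 : (f x - f y)^2 ≤ ((k:ℝ)+1)*(f x - f a)^2 + (((k:ℝ)+1)/k)*(f a - f y)^2 := by
            have h2 : f x - f y = (f x - f a) + (f a - f y) := by ring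
            rw [h2]; exact step_ineq hc
          have hBa := Bmat_nonneg W x a
          have hBk := Bpow_nonneg W k a y
          have hdiv : (0:ℝ) ≤ ((k:ℝ)+1)/k := by positivity
          calc Bmat W x a * (Bmat W ^ k) a y * (f x - f y) ^ 2
              ≤ Bmat W x a * (Bmat W ^ k) a y *
                (((k:ℝ)+1)*(f x - f a)^2 + (((k:ℝ)+1)/k)*(f a - f y)^2) :=
                mul_le_mul_of_nonneg_left h1 (mul_nonneg hBa hBk)
            _ = ((k:ℝ)+1) * (Bmat W x a * (Bmat W ^ k) a y * (f x - f a) ^ 2)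
                + (((k:ℝ)+1)/k) * (Bmat W x a * ((Bmat W ^ k) a y * (f a - f y)^2)) := by ring
            _ ≤ ((k:ℝ)+1) * (Bmat W x a * (Bmat W ^ k) a y * (f x - f a) ^ 2)
                + (((k:ℝ)+1)/k) * (Bmat W x a * ((k:ℝ) * Qsum W f k a y)) :=
                add_le_add le_rfl
                  (mul_le_mul_of_nonneg_left (mul_le_mul_of_nonneg_left (ih a y) hBa) hdiv)
            _ = ((k:ℝ)+1) * (Bmat W x a * (Bmat W ^ k) a y * (f x - f a) ^ 2)
                + ((k:ℝ)+1) * (Bmat W x a * Qsum W f k a y) := by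
                field_simp
        calc (∑ a, Bmat W x a * (Bmat W ^ k) a y * (f x - f y) ^ 2)
            ≤ ∑ a, (((k:ℝ)+1) * (Bmat W x a * (Bmat W ^ k) a y * (f x - f a) ^ 2)
              + ((k:ℝ)+1) * (Bmat W x a * Qsum W f k a y)) :=
              Finset.sum_le_sum fun a _ => point a
          _ = ((k:ℝ)+1) * ((∑ b, Bmat W x b * (Bmat W ^ k) b y * (f x - f b) ^ 2)
              + ∑ c, Bmat W x c * Qsum W f k c y) := by
              rw [Finset.sum_add_distrib, ← Finset.mul_sum, ← Finset.mul_sum, mul_add]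

lemma sum_swap4 {M : Type*} [AddCommMonoid M] (g : Fin n → Fin n → Fin n → Fin n → M) :
    ∑ x, ∑ y, ∑ a, ∑ b, g x y a b = ∑ a, ∑ b, ∑ x, ∑ y, g x y a b := by
  trans ∑ x, ∑ a, ∑ y, ∑ b, g x y a b
  · exact Finset.sum_congr rfl fun x _ => Finset.sum_comm
  trans ∑ a, ∑ x, ∑ y, ∑ b, g x y a b
  · exact Finset.sum_comm
  refine Finset.sum_congr rfl fun a _ => ?_
  trans ∑ x, ∑ b, ∑ y, g x y a b
  · exact Finset.sum_congr rfl fun x _ => Finset.sum_comm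
  · exact Finset.sum_comm

lemma dist_equivariant (W : Matrix (Fin n) (Fin n) ℝ)
    (hconn : (SimpleGraph.fromRel fun x y => W x y ≠ 0).Connected)
    (e : Equiv.Perm (Fin n)) (hWe : ∀ a b, W (e a) (e b) = W a b) (x y : Fin n) :
    (SimpleGraph.fromRel fun x y => W x y ≠ 0).dist (e x) (e y)
      = (SimpleGraph.fromRel fun x y => W x y ≠ 0).dist x y := by
  set G := SimpleGraph.fromRel fun x y => W x y ≠ 0 with hG
  have le1 : ∀ (e : Equiv.Perm (Fin n)), (∀ a b, W (e a) (e b) = W a b) →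
      ∀ x y, G.dist (e x) (e y) ≤ G.dist x y := by
    intro e hWe x y
    obtain ⟨p, hp⟩ := hconn.exists_walk_length_eq_dist x y
    have hadj : ∀ a b, G.Adj a b → G.Adj (e a) (e b) := by
      intro a b hab
      rw [hG, SimpleGraph.fromRel_adj] at hab ⊢
      refine ⟨by simp [e.injective.ne_iff, hab.1], ?_⟩
      rcases hab.2 with h | h
      · exact Or.inl (by rw [hWe]; exact h)
      · exact Or.inr (by rw [hWe]; exact h)
    let hom : G →g G := ⟨e.toFun, fun h => hadj _ _ h⟩
    have := (SimpleGraph.dist_le (p.map hom))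
    rwa [SimpleGraph.Walk.length_map, hp] at this
  have hWe' : ∀ a b, W (e.symm a) (e.symm b) = W a b := by
    intro a b
    conv_rhs => rw [← e.apply_symm_apply a, ← e.apply_symm_apply b]
    rw [hWe]
  refine le_antisymm (le1 e hWe x y) ?_
  have := le1 e.symm hWe' (e x) (e y)
  simpa using this

lemma poincare (hn : 0 < n) (W : Matrix (Fin n) (Fin n) ℝ)
    (hsym : ∀ x y, W x y = W y x) (hnn : ∀ x y, 0 ≤ W x y)
    (hW1 : ∀ x y, W x y = 0 ∨ 1 ≤ W x y)
    (hconn : (SimpleGraph.fromRel fun x y => W x y ≠ 0).Connected)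
    (htrans : ∀ x y : Fin n, ∃ e : Equiv.Perm (Fin n),
      e x = y ∧ ∀ a b, W (e a) (e b) = W a b)
    (D : ℕ) (hD : ∀ s t : Fin n, (SimpleGraph.fromRel fun x y => W x y ≠ 0).dist s t ≤ D)
    (f : Fin n → ℝ) :
    ∑ x, ∑ y, (f x - f y)^2 ≤ (n : ℝ) * (D:ℝ)^2 * ∑ a, ∑ b, W a b * (f a - f b)^2 := by
  set G := SimpleGraph.fromRel fun x y => W x y ≠ 0 with hG
  set k : Fin n → Fin n → ℕ := fun x y => G.dist x y with hk
  set N : Fin n → Fin n → ℝ := fun x y => (Bmat W ^ (k x y)) x y with hN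
  have hN1 : ∀ x y, 1 ≤ N x y := by
    intro x y
    obtain ⟨p, hp⟩ := hconn.exists_walk_length_eq_dist x y
    have := one_le_Bpow_walk W hsym p
    rwa [hp] at this
  have hN0 : ∀ x y, (0:ℝ) < N x y := fun x y => lt_of_lt_of_le one_pos (hN1 x y)
  set T : Fin n → Fin n → Fin n → Fin n → ℝ := fun x y a b =>
    (∑ i ∈ range (k x y), (Bmat W ^ i) x a * Bmat W a b * (Bmat W ^ (k x y - 1 - i)) b y)
      / N x y with hT
  have hTnn : ∀ x y a b, 0 ≤ T x y a b := by
    intro x y a b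
    apply div_nonneg _ (le_of_lt (hN0 x y))
    refine Finset.sum_nonneg fun i _ => ?_
    exact mul_nonneg (mul_nonneg (Bpow_nonneg W i x a) (Bmat_nonneg W a b))
      (Bpow_nonneg W _ b y)
  set L : Fin n → Fin n → ℝ := fun a b => ∑ x, ∑ y, T x y a b with hL
  have hLnn : ∀ a b, 0 ≤ L a b :=
    fun a b => Finset.sum_nonneg fun x _ => Finset.sum_nonneg fun y _ => hTnn x y a b
  -- Step B : rewriting Qsum / N
  have hQrw : ∀ x y, Qsum W f (k x y) x y / N x y = ∑ a, ∑ b, T x y a b * (f a - f b)^2 := by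
    intro x y
    unfold Qsum
    rw [Finset.sum_div]
    have h1 : ∀ a, ∀ b, T x y a b * (f a - f b)^2
        = ∑ i ∈ range (k x y),
            (Bmat W ^ i) x a * Bmat W a b * (Bmat W ^ (k x y - 1 - i)) b y
              * (f a - f b)^2 / N x y := by
      intro a b
      rw [hT]
      dsimp only
      rw [Finset.sum_div, Finset.sum_mul]
      refine Finset.sum_congr rfl fun i _ => ?_
      field_simp
    rw [Finset.sum_congr rfl fun a (_ : a ∈ univ) => Finset.sum_congr rfl fun b (_ : b ∈ univ) => h1 a b]
    -- now both sides are triple sums, reorder i outside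
    trans ∑ a, ∑ i ∈ range (k x y), ∑ b,
        (Bmat W ^ i) x a * Bmat W a b * (Bmat W ^ (k x y - 1 - i)) b y * (f a - f b)^2 / N x y
    swap
    · exact (Finset.sum_congr rfl fun a _ => Finset.sum_comm).symm
    trans ∑ i ∈ range (k x y), ∑ a, ∑ b,
        (Bmat W ^ i) x a * Bmat W a b * (Bmat W ^ (k x y - 1 - i)) b y * (f a - f b)^2 / N x y
    swap
    · exact Finset.sum_comm
    refine Finset.sum_congr rfl fun i _ => ?_
    rw [Finset.sum_div]
    refine Finset.sum_congr rfl fun a _ => ?_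
    rw [Finset.sum_div]
  -- Step A : per-pair bound
  have hA : ∀ x y, (f x - f y)^2 ≤ (D:ℝ) * (Qsum W f (k x y) x y / N x y) := by
    intro x y
    have h1 := key_CS W f (k x y) x y
    have hkD : (k x y : ℝ) ≤ (D : ℝ) := by exact_mod_cast hD x y
    have hQnn := Qsum_nonneg W f (k x y) x y
    have h2 : N x y * (f x - f y)^2 ≤ (D:ℝ) * Qsum W f (k x y) x y :=
      le_trans h1 (mul_le_mul_of_nonneg_right hkD hQnn)
    rw [← mul_div_assoc, le_div_iff₀ (hN0 x y)]
    calc (f x - f y)^2 * N x y = N x y * (f x - f y)^2 := by ring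
      _ ≤ (D:ℝ) * Qsum W f (k x y) x y := h2
  -- Step E : total load
  have hSsum : ∑ a, ∑ b, L a b = ∑ x, ∑ y, (k x y : ℝ) := by
    rw [hL]
    dsimp only
    rw [← sum_swap4 (fun x y a b => T x y a b)]
    refine Finset.sum_congr rfl fun x _ => Finset.sum_congr rfl fun y _ => ?_
    have h1 : ∑ a, ∑ b, T x y a b
        = ∑ i ∈ range (k x y), (∑ a, ∑ b,
            (Bmat W ^ i) x a * Bmat W a b * (Bmat W ^ (k x y - 1 - i)) b y) / N x y := by
      trans ∑ a, ∑ i ∈ range (k x y), (∑ b,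
          (Bmat W ^ i) x a * Bmat W a b * (Bmat W ^ (k x y - 1 - i)) b y) / N x y
      · refine Finset.sum_congr rfl fun a _ => ?_
        trans ∑ b, ∑ i ∈ range (k x y),
            (Bmat W ^ i) x a * Bmat W a b * (Bmat W ^ (k x y - 1 - i)) b y / N x y
        · refine Finset.sum_congr rfl fun b _ => ?_
          rw [hT]
          dsimp only
          exact Finset.sum_div _ _ _
        trans ∑ i ∈ range (k x y), ∑ b,
            (Bmat W ^ i) x a * Bmat W a b * (Bmat W ^ (k x y - 1 - i)) b y / N x y
        · exact Finset.sum_comm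
        · exact Finset.sum_congr rfl fun i _ => (Finset.sum_div _ _ _).symm
      · rw [Finset.sum_comm]
        exact Finset.sum_congr rfl fun i _ => (Finset.sum_div _ _ _).symm
    rw [h1]
    have h2 : ∀ i ∈ range (k x y), (∑ a, ∑ b,
        (Bmat W ^ i) x a * Bmat W a b * (Bmat W ^ (k x y - 1 - i)) b y) = N x y := by
      intro i hi
      rw [hN]
      exact sum_Bpow_mid W (mem_range.mp hi) x y
    trans ∑ _i ∈ range (k x y), (1:ℝ)
    · exact Finset.sum_congr rfl fun i hi => by
        rw [h2 i hi, div_self (ne_of_gt (hN0 x y))]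
    · rw [Finset.sum_const, card_range, nsmul_eq_mul, mul_one]
  -- Step C : equivariance of L
  have hLequiv : ∀ (e : Equiv.Perm (Fin n)), (∀ a b, W (e a) (e b) = W a b) →
      ∀ a b, L (e a) (e b) = L a b := by
    intro e hWe a b
    rw [hL]
    dsimp only
    rw [← Equiv.sum_comp e (fun x => ∑ y, T x y (e a) (e b))]
    refine Finset.sum_congr rfl fun x _ => ?_
    rw [← Equiv.sum_comp e (fun y => T (e x) y (e a) (e b))]
    refine Finset.sum_congr rfl fun y _ => ?_
    rw [hT]
    dsimp only
    have hkeq : k (e x) (e y) = k x y := dist_equivariant W hconn e hWe x y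
    have hNeq : N (e x) (e y) = N x y := by
      rw [hN]; dsimp only; rw [hkeq, Bpow_equivariant W e hWe]
    rw [hkeq, hNeq]
    congr 1
    refine Finset.sum_congr rfl fun i _ => ?_
    rw [Bpow_equivariant W e hWe, Bpow_equivariant W e hWe]
    congr 1
    have : Bmat W (e a) (e b) = Bmat W a b := by
      simp only [Bmat, Matrix.of_apply, hWe]
      congr 1
      simp [e.injective.ne_iff]
    rw [this]
  -- Step D/F : row sums of L are constant, bounded by n * D
  have hLbound : ∀ a b, L a b ≤ (n:ℝ) * (D:ℝ) := by
    have hS : ∀ a a' : Fin n, (∑ b, L a b) = ∑ b, L a' b := by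
      intro a a'
      obtain ⟨e, hea, hWe⟩ := htrans a a'
      rw [← hea]
      rw [← Equiv.sum_comp e (fun b => L (e a) b)]
      exact Finset.sum_congr rfl fun b _ => (hLequiv e hWe a b).symm
    intro a b
    have h1 : L a b ≤ ∑ b', L a b' :=
      Finset.single_le_sum (fun b' _ => hLnn a b') (mem_univ b)
    have h2 : (n:ℝ) * (∑ b', L a b') = ∑ a', ∑ b', L a' b' := by
      rw [Finset.sum_congr rfl fun a' (_ : a' ∈ univ) => (hS a' a)]
      rw [Finset.sum_const, card_univ, Fintype.card_fin, nsmul_eq_mul]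
    have h3 : ∑ x, ∑ y, (k x y : ℝ) ≤ (n:ℝ) * ((n:ℝ) * (D:ℝ)) := by
      calc ∑ x, ∑ y, (k x y : ℝ) ≤ ∑ x : Fin n, ∑ y : Fin n, (D:ℝ) := by
            refine Finset.sum_le_sum fun x _ => Finset.sum_le_sum fun y _ => ?_
            exact_mod_cast hD x y
        _ = (n:ℝ) * ((n:ℝ) * (D:ℝ)) := by
            simp [Finset.sum_const, card_univ, Fintype.card_fin]
            try ring
    have h4 : (n:ℝ) * (∑ b', L a b') ≤ (n:ℝ) * ((n:ℝ) * (D:ℝ)) := by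
      rw [h2, hSsum]; exact h3
    have hnpos : (0:ℝ) < n := by exact_mod_cast hn
    have h5 : (∑ b', L a b') ≤ (n:ℝ) * (D:ℝ) := by
      have := le_of_mul_le_mul_left h4 hnpos
      exact this
    exact le_trans h1 h5
  -- Step G : pointwise bound against W
  have hG2 : ∀ a b, L a b * (f a - f b)^2 ≤ (n:ℝ) * (D:ℝ) * (W a b * (f a - f b)^2) := by
    intro a b
    by_cases hB : Bmat W a b = 0
    · have hL0 : L a b = 0 := by
        rw [hL]
        dsimp only
        refine Finset.sum_eq_zero fun x _ => Finset.sum_eq_zero fun y _ => ?_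
        rw [hT]
        dsimp only
        rw [Finset.sum_eq_zero fun i _ => by rw [hB]; ring, zero_div]
      rw [hL0, zero_mul]
      have : 0 ≤ W a b * (f a - f b)^2 := mul_nonneg (hnn a b) (sq_nonneg _)
      positivity
    · have hWab : 1 ≤ W a b := by
        rcases hW1 a b with h | h
        · exfalso; apply hB; simp [Bmat, h]
        · exact h
      have hDnn : (0:ℝ) ≤ (n:ℝ) * (D:ℝ) := by positivity
      calc L a b * (f a - f b)^2 ≤ ((n:ℝ) * (D:ℝ)) * (f a - f b)^2 :=
            mul_le_mul_of_nonneg_right (hLbound a b) (sq_nonneg _)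
        _ ≤ (n:ℝ) * (D:ℝ) * (W a b * (f a - f b)^2) :=
            mul_le_mul_of_nonneg_left (le_mul_of_one_le_left (sq_nonneg _) hWab) hDnn
  -- final chain
  calc ∑ x, ∑ y, (f x - f y)^2
      ≤ ∑ x, ∑ y, (D:ℝ) * (Qsum W f (k x y) x y / N x y) :=
        Finset.sum_le_sum fun x _ => Finset.sum_le_sum fun y _ => hA x y
    _ = (D:ℝ) * ∑ x, ∑ y, Qsum W f (k x y) x y / N x y := by
        rw [Finset.mul_sum]
        exact Finset.sum_congr rfl fun x _ => by rw [Finset.mul_sum]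
    _ = (D:ℝ) * ∑ a, ∑ b, L a b * (f a - f b)^2 := by
        congr 1
        rw [Finset.sum_congr rfl fun x (_ : x ∈ univ) => Finset.sum_congr rfl
          fun y (_ : y ∈ univ) => hQrw x y]
        rw [sum_swap4 (fun x y a b => T x y a b * (f a - f b)^2)]
        refine Finset.sum_congr rfl fun a _ => Finset.sum_congr rfl fun b _ => ?_
        rw [hL]
        dsimp only
        rw [Finset.sum_mul]
        exact Finset.sum_congr rfl fun x _ => by rw [Finset.sum_mul]
    _ ≤ (D:ℝ) * ∑ a, ∑ b, (n:ℝ) * (D:ℝ) * (W a b * (f a - f b)^2) := by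
        have hDnn : (0:ℝ) ≤ (D:ℝ) := by positivity
        refine mul_le_mul_of_nonneg_left ?_ hDnn
        exact Finset.sum_le_sum fun a _ => Finset.sum_le_sum fun b _ => hG2 a b
    _ = (n:ℝ) * (D:ℝ)^2 * ∑ a, ∑ b, W a b * (f a - f b)^2 := by
        rw [Finset.mul_sum, Finset.mul_sum]
        refine Finset.sum_congr rfl fun a _ => ?_
        rw [Finset.mul_sum, Finset.mul_sum]
        refine Finset.sum_congr rfl fun b _ => ?_
        ring

lemma sum_sq_expand (f : Fin n → ℝ) :
    ∑ x, ∑ y, (f x - f y)^2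
      = 2 * (n:ℝ) * (∑ x, f x ^ 2) - 2 * (∑ x, f x)^2 := by
  have h : ∀ x : Fin n, ∑ y, (f x - f y)^2
      = (n:ℝ) * f x ^2 + (∑ y, f y^2) - 2 * f x * ∑ y, f y := by
    intro x
    have h0 : ∀ y : Fin n, (f x - f y)^2 = f x^2 + f y^2 - 2*f x*f y := fun y => by ring
    rw [Finset.sum_congr rfl fun y _ => h0 y, Finset.sum_sub_distrib, Finset.sum_add_distrib,
      Finset.sum_const, card_univ, Fintype.card_fin, nsmul_eq_mul]
    have h0b : (∑ y, 2 * f x * f y) = 2 * f x * ∑ y, f y := (Finset.mul_sum _ _ _).symm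
    rw [h0b]
  rw [Finset.sum_congr rfl fun x _ => h x, Finset.sum_sub_distrib, Finset.sum_add_distrib,
    ← Finset.mul_sum, Finset.sum_const, card_univ, Fintype.card_fin, nsmul_eq_mul]
  have h2 : (∑ x, 2 * f x * ∑ y, f y) = 2 * (∑ x, f x)^2 := by
    have hfun : (∑ x, 2 * f x * ∑ y, f y) = ∑ x, (2 * ∑ y, f y) * f x :=
      Finset.sum_congr rfl fun x _ => by ring
    rw [hfun, ← Finset.mul_sum]
    ring
  rw [h2]
  ring

lemma rayleigh_eq (W : Matrix (Fin n) (Fin n) ℝ) (hsym : ∀ x y, W x y = W y x)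
    (wd : ℝ) (hwd : wd ≠ 0) (hdeg : ∀ x, (∑ z, W x z) = wd) (f : Fin n → ℝ) :
    f ⬝ᵥ ((normLapT W wd) *ᵥ f) = (∑ a, ∑ b, W a b * (f a - f b)^2) / (2 * wd) := by
  have hcol : ∀ b, (∑ a, W a b) = wd := by
    intro b
    rw [Finset.sum_congr rfl fun a _ => hsym a b]
    exact hdeg b
  have hmv : ∀ x, ((normLapT W wd) *ᵥ f) x = f x - (∑ y, W x y * f y)/wd := by
    intro x
    rw [Matrix.mulVec, dotProduct]
    unfold normLapT
    simp only [Matrix.of_apply, sub_mul, ite_mul, one_mul, zero_mul]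
    rw [Finset.sum_sub_distrib]
    congr 1
    · rw [Finset.sum_ite_eq univ x f]
      simp
    · rw [Finset.sum_div]
      exact Finset.sum_congr rfl fun y _ => by ring
  have key : (∑ a, ∑ b, W a b * (f a - f b)^2)
      = 2 * wd * (∑ x, f x^2) - 2 * ∑ x, ∑ y, W x y * f x * f y := by
    have h1 : ∀ a, ∑ b, W a b * (f a - f b)^2
        = wd * f a^2 + (∑ b, W a b * f b^2) - 2 * ∑ b, W a b * f a * f b := by
      intro a
      have h0 : ∀ b, W a b * (f a - f b)^2
          = W a b * f a^2 + W a b * f b^2 - 2*(W a b * f a * f b) := fun b => by ring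
      rw [Finset.sum_congr rfl fun b _ => h0 b, Finset.sum_sub_distrib, Finset.sum_add_distrib]
      have hb1 : (∑ b, W a b * f a ^2) = (∑ b, W a b) * f a^2 := (Finset.sum_mul _ _ _).symm
      rw [hb1, hdeg a, ← Finset.mul_sum]
      try ring_nf
    rw [Finset.sum_congr rfl fun a _ => h1 a, Finset.sum_sub_distrib, Finset.sum_add_distrib,
      ← Finset.mul_sum, ← Finset.mul_sum]
    have h2 : (∑ a, ∑ b, W a b * f b^2) = wd * ∑ b, f b^2 := by
      rw [Finset.sum_comm]
      have hb2 : ∀ b : Fin n, (∑ a, W a b * f b^2) = wd * f b^2 := by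
        intro b
        have : (∑ a, W a b * f b^2) = (∑ a, W a b) * f b^2 := (Finset.sum_mul _ _ _).symm
        rw [this, hcol b]
      rw [Finset.sum_congr rfl fun b _ => hb2 b, ← Finset.mul_sum]
    rw [h2]
    ring
  rw [dotProduct, Finset.sum_congr rfl fun x _ => by rw [hmv x], key]
  have h3 : (∑ x, f x * (f x - (∑ y, W x y * f y)/wd))
      = (∑ x, f x^2) - (∑ x, ∑ y, W x y * f x * f y)/wd := by
    have hx1 : ∀ x : Fin n, f x * (f x - (∑ y, W x y * f y)/wd)
        = f x^2 - (∑ y, W x y * f x * f y)/wd := by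
      intro x
      have hy : (∑ y, W x y * f x * f y) = f x * ∑ y, W x y * f y := by
        rw [Finset.mul_sum]
        exact Finset.sum_congr rfl fun y _ => by ring
      rw [hy]
      field_simp
    rw [Finset.sum_congr rfl fun x _ => hx1 x, Finset.sum_sub_distrib, Finset.sum_div]
  rw [h3]
  field_simp

lemma euclid_inner (u v : EuclideanSpace ℝ (Fin n)) :
    (inner ℝ u v : ℝ) = ∑ x, u x * v x := by
  simp [PiLp.inner_apply, mul_comm]

lemma exists_one_le_W (W : Matrix (Fin n) (Fin n) ℝ) (hsym : ∀ x y, W x y = W y x)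
    (hW1 : ∀ x y, W x y = 0 ∨ 1 ≤ W x y) {u v : Fin n} (hne : u ≠ v)
    (hr : (SimpleGraph.fromRel fun x y => W x y ≠ 0).Reachable u v) :
    ∃ z, 1 ≤ W u z := by
  obtain ⟨p⟩ := hr
  cases p with
  | nil => exact absurd rfl hne
  | @cons _ z _ hadj q =>
      refine ⟨z, ?_⟩
      rw [SimpleGraph.fromRel_adj] at hadj
      have hne0 : W u z ≠ 0 := by
        rcases hadj.2 with h | h
        · exact h
        · rw [hsym]; exact h
      rcases hW1 u z with h | h
      · exact absurd h hne0
      · exact h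

set_option maxHeartbeats 1000000 in
lemma second_eig_bound (hn0 : 0 < n) (W : Matrix (Fin n) (Fin n) ℝ)
    (hsym : ∀ x y, W x y = W y x) (hnn : ∀ x y, 0 ≤ W x y)
    (hW1 : ∀ x y, W x y = 0 ∨ 1 ≤ W x y)
    (hconn : (SimpleGraph.fromRel fun x y => W x y ≠ 0).Connected)
    (htrans : ∀ x y : Fin n, ∃ e : Equiv.Perm (Fin n),
      e x = y ∧ ∀ a b, W (e a) (e b) = W a b)
    (wd : ℝ) (hdeg : ∀ x, (∑ z, W x z) = wd) (hwd0 : (0:ℝ) < wd)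
    (D : ℕ) (hD : ∀ s t : Fin n, (SimpleGraph.fromRel fun x y => W x y ≠ 0).dist s t ≤ D)
    (hDpos : (0:ℝ) < (D:ℝ))
    (lam0 lam1 : ℝ) (v0 v1 : Fin n → ℝ)
    (hv0 : normLapT W wd *ᵥ v0 = lam0 • v0) (hv1 : normLapT W wd *ᵥ v1 = lam1 • v1)
    (h00 : ∑ x, v0 x * v0 x = 1) (h11 : ∑ x, v1 x * v1 x = 1)
    (h01 : ∑ x, v0 x * v1 x = 0) (hmon : lam0 ≤ lam1) :
    1 / (wd * (D:ℝ)^2) ≤ lam1 := by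
  obtain ⟨α, β, hzero, hpos⟩ : ∃ α β : ℝ,
      α * (∑ x, v0 x) + β * (∑ x, v1 x) = 0 ∧ 0 < α^2 + β^2 := by
    by_cases hcase : (∑ x, v0 x) = 0 ∧ (∑ x, v1 x) = 0
    · exact ⟨1, 0, by rw [hcase.1, hcase.2]; ring, by norm_num⟩
    · refine ⟨(∑ x, v1 x), -(∑ x, v0 x), by ring, ?_⟩
      rcases (not_and_or.mp hcase) with h | h
      · have h3 : 0 < (∑ x, v0 x)^2 :=
          (sq_nonneg _).lt_of_ne (Ne.symm (pow_ne_zero 2 h))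
        nlinarith [sq_nonneg (∑ x, v1 x)]
      · have h3 : 0 < (∑ x, v1 x)^2 :=
          (sq_nonneg _).lt_of_ne (Ne.symm (pow_ne_zero 2 h))
        nlinarith [sq_nonneg (∑ x, v0 x)]
  set f : Fin n → ℝ := fun x => α * v0 x + β * v1 x with hf
  have hsumf : ∑ x, f x = 0 := by
    rw [hf]
    dsimp only
    rw [Finset.sum_add_distrib, ← Finset.mul_sum, ← Finset.mul_sum]
    exact hzero
  have hnormf : ∑ x, f x ^ 2 = α^2 + β^2 := by
    have hexp : ∀ x, f x ^ 2 = α^2 * (v0 x * v0 x) + (2*α*β) * (v0 x * v1 x)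
        + β^2 * (v1 x * v1 x) := by
      intro x
      rw [hf]
      ring
    rw [Finset.sum_congr rfl fun x _ => hexp x, Finset.sum_add_distrib,
      Finset.sum_add_distrib, ← Finset.mul_sum, ← Finset.mul_sum, ← Finset.mul_sum,
      h00, h01, h11]
    ring
  have hLf : normLapT W wd *ᵥ f = fun x => α * (lam0 * v0 x) + β * (lam1 * v1 x) := by
    have hfv : f = α • v0 + β • v1 := by
      funext x
      simp [hf]
    rw [hfv, Matrix.mulVec_add, Matrix.mulVec_smul, Matrix.mulVec_smul, hv0, hv1]
    funext x
    simp [Pi.smul_apply, smul_eq_mul]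
    try ring
  have hfLf : f ⬝ᵥ (normLapT W wd *ᵥ f) = α^2 * lam0 + β^2 * lam1 := by
    rw [hLf, dotProduct]
    have hexp : ∀ x, f x * (α * (lam0 * v0 x) + β * (lam1 * v1 x))
        = (α^2*lam0) * (v0 x * v0 x) + (α*β*(lam0+lam1)) * (v0 x * v1 x)
          + (β^2*lam1) * (v1 x * v1 x) := by
      intro x
      rw [hf]
      ring
    rw [Finset.sum_congr rfl fun x _ => hexp x, Finset.sum_add_distrib,
      Finset.sum_add_distrib, ← Finset.mul_sum, ← Finset.mul_sum, ← Finset.mul_sum,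
      h00, h01, h11]
    ring
  have hpoin := poincare hn0 W hsym hnn hW1 hconn htrans D hD f
  have hlhs : ∑ x, ∑ y, (f x - f y)^2 = 2 * (n:ℝ) * (α^2 + β^2) := by
    rw [sum_sq_expand f, hsumf, hnormf]
    ring
  have hR : 2 * (α^2 + β^2) / (D:ℝ)^2 ≤ ∑ a, ∑ b, W a b * (f a - f b)^2 := by
    rw [hlhs] at hpoin
    have hnpos : (0:ℝ) < n := by exact_mod_cast hn0
    rw [div_le_iff₀ (by positivity)]
    nlinarith [hpoin]
  have hray := rayleigh_eq W hsym wd (ne_of_gt hwd0) hdeg f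
  have hmain : (α^2 + β^2) / (wd * (D:ℝ)^2) ≤ α^2 * lam0 + β^2 * lam1 := by
    rw [← hfLf, hray]
    rw [div_le_div_iff₀ (by positivity) (by positivity)]
    have h2 := hR
    rw [div_le_iff₀ (by positivity)] at h2
    nlinarith [h2]
  have hup : α^2 * lam0 + β^2 * lam1 ≤ (α^2 + β^2) * lam1 := by
    nlinarith [sq_nonneg α, sq_nonneg β]
  have h3 : (α^2 + β^2) / (wd * (D:ℝ)^2) ≤ (α^2 + β^2) * lam1 := le_trans hmain hup
  rw [div_le_iff₀ (by positivity)] at h3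
  rw [div_le_iff₀ (by positivity : (0:ℝ) < wd * (D:ℝ)^2)]
  nlinarith [h3, hpos]

set_option maxHeartbeats 1000000 in
/-- For every finite connected weighted vertex-transitive graph with common degree `wd`
and edge weights `≥ 1`, one has `λ₂ ≥ 1/(2·wd·diam²)`. -/
theorem stmt18 {n : ℕ} (hn : 2 ≤ n) (W : Matrix (Fin n) (Fin n) ℝ)
    (hsym : ∀ x y, W x y = W y x) (hnn : ∀ x y, 0 ≤ W x y) (hloop : ∀ x, W x x = 0)
    (hW1 : ∀ x y, W x y = 0 ∨ 1 ≤ W x y)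
    (hconn : (SimpleGraph.fromRel fun x y => W x y ≠ 0).Connected)
    (htrans : ∀ x y : Fin n, ∃ e : Equiv.Perm (Fin n),
      e x = y ∧ ∀ a b, W (e a) (e b) = W a b)
    (wd : ℝ) (hdeg : ∀ x, (∑ z, W x z) = wd)
    (hL : (normLapT W wd).IsHermitian)
    (lam : Fin n → ℝ) (hmono : Monotone lam)
    (hperm : ∃ σ : Equiv.Perm (Fin n), lam = hL.eigenvalues ∘ σ)
    (D : ℕ) (hD : ∀ s t : Fin n, (SimpleGraph.fromRel fun x y => W x y ≠ 0).dist s t ≤ D) :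
    1 / (2 * wd * (D : ℝ) ^ 2) ≤ lam ⟨1, by omega⟩ := by
  have hn0 : 0 < n := by omega
  have hne : (⟨0, by omega⟩ : Fin n) ≠ ⟨1, by omega⟩ := by simp [Fin.ext_iff]
  have hwd1 : 1 ≤ wd := by
    obtain ⟨z, hz⟩ := exists_one_le_W W hsym hW1 hne
      (hconn.preconnected ⟨0, by omega⟩ ⟨1, by omega⟩)
    calc (1:ℝ) ≤ W ⟨0, by omega⟩ z := hz
      _ ≤ ∑ z', W ⟨0, by omega⟩ z' :=
        Finset.single_le_sum (fun z' _ => hnn _ z') (mem_univ z)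
      _ = wd := hdeg _
  have hwd0 : (0:ℝ) < wd := by linarith
  have hD1 : 1 ≤ D := by
    have h1 := hconn.pos_dist_of_ne hne
    have h2 := hD ⟨0, by omega⟩ ⟨1, by omega⟩
    omega
  have hDpos : (0:ℝ) < (D:ℝ) := by exact_mod_cast hD1
  obtain ⟨σ, hσ⟩ := hperm
  have hi01 : σ ⟨0, by omega⟩ ≠ σ ⟨1, by omega⟩ := by
    simp only [Ne, EmbeddingLike.apply_eq_iff_eq]
    simp [Fin.ext_iff]
  have hON := hL.eigenvectorBasis.orthonormal
  have h00 : ∑ x, hL.eigenvectorBasis (σ ⟨0, by omega⟩) x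
      * hL.eigenvectorBasis (σ ⟨0, by omega⟩) x = 1 := by
    have h := orthonormal_iff_ite.mp hON (σ ⟨0, by omega⟩) (σ ⟨0, by omega⟩)
    rw [euclid_inner] at h
    simpa using h
  have h11 : ∑ x, hL.eigenvectorBasis (σ ⟨1, by omega⟩) x
      * hL.eigenvectorBasis (σ ⟨1, by omega⟩) x = 1 := by
    have h := orthonormal_iff_ite.mp hON (σ ⟨1, by omega⟩) (σ ⟨1, by omega⟩)
    rw [euclid_inner] at h
    simpa using h
  have h01 : ∑ x, hL.eigenvectorBasis (σ ⟨0, by omega⟩) x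
      * hL.eigenvectorBasis (σ ⟨1, by omega⟩) x = 0 := by
    have h := orthonormal_iff_ite.mp hON (σ ⟨0, by omega⟩) (σ ⟨1, by omega⟩)
    rw [euclid_inner] at h
    simpa [hi01] using h
  have hmon : hL.eigenvalues (σ ⟨0, by omega⟩) ≤ hL.eigenvalues (σ ⟨1, by omega⟩) := by
    have h := hmono (show (⟨0, by omega⟩ : Fin n) ≤ ⟨1, by omega⟩ by simp [Fin.le_def])
    rwa [hσ] at h
  have hfin := second_eig_bound hn0 W hsym hnn hW1 hconn htrans wd hdeg hwd0 D hD hDpos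
    (hL.eigenvalues (σ ⟨0, by omega⟩)) (hL.eigenvalues (σ ⟨1, by omega⟩))
    (hL.eigenvectorBasis (σ ⟨0, by omega⟩)) (hL.eigenvectorBasis (σ ⟨1, by omega⟩))
    (hL.mulVec_eigenvectorBasis _) (hL.mulVec_eigenvectorBasis _)
    h00 h11 h01 hmon
  have hlam1' : lam ⟨1, by omega⟩ = hL.eigenvalues (σ ⟨1, by omega⟩) := by rw [hσ]; rfl
  rw [hlam1']
  calc 1 / (2 * wd * (D:ℝ)^2) ≤ 1 / (wd * (D:ℝ)^2) := by
        apply one_div_le_one_div_of_le (by positivity)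
        nlinarith [hwd0, hDpos]
    _ ≤ hL.eigenvalues (σ ⟨1, by omega⟩) := hfin
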